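/- There is no Laurent polynomial f ∈ ℂ(q)[X, X⁻¹] satisfying q⁶X⁻⁶·f(X) + f(q⁻²X) = q⁶X⁻⁵ − q²X⁻¹, where q is a transcendental element (a formal parameter). -/

import Mathlib

open LaurentPolynomial

noncomputable section

/-- The field `ℂ(q)` with `q` a formal parameter. -/
abbrev Kq : Type := RatFunc ℂ

/-- The transcendental parameter `q`. -/
def qq : Kq := RatFunc.X

/-- Substitution `X ↦ c·X` on Laurent polynomials over `ℂ(q)`. -/
def substScale (c : Kq) (f : LaurentPolynomial Kq) : LaurentPolynomial Kq :=
  Finsupp.sum f.coeff (fun n a => C (a * c ^ n) * T n)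

/-- Coefficient of a Laurent polynomial at index `k`. -/
def cf (f : LaurentPolynomial Kq) (k : ℤ) : Kq := f.coeff k

lemma coeff_CT_mul (a : Kq) (n : ℤ) (f : LaurentPolynomial Kq) (k : ℤ) :
    cf (C a * T n * f) k = a * cf f (k - n) := by
  have h : (C a * T n * f : LaurentPolynomial Kq)
      = (AddMonoidAlgebra.single n a * (f : AddMonoidAlgebra Kq ℤ) : AddMonoidAlgebra Kq ℤ) := by
    rw [single_eq_C_mul_T]
  rw [cf, h, AddMonoidAlgebra.coeff_single_mul_apply, neg_add_eq_sub]; rfl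

lemma coeff_substScale (c : Kq) (f : LaurentPolynomial Kq) (k : ℤ) :
    cf (substScale c f) k = cf f k * c ^ k := by
  unfold substScale cf
  simp_rw [← single_eq_C_mul_T]
  rw [AddMonoidAlgebra.coeff_finsuppSum, Finsupp.sum_apply]
  rw [Finsupp.sum_eq_single k]
  · rw [AddMonoidAlgebra.coeff_single, Finsupp.single_eq_same]
  · intro n _ hn
    rw [AddMonoidAlgebra.coeff_single]; exact Finsupp.single_eq_of_ne' hn
  · intro _
    simp

lemma coeff_CT (a : Kq) (n k : ℤ) :
    cf (C a * T n) k = if n = k then a else 0 := by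
  rw [← single_eq_C_mul_T, cf, AddMonoidAlgebra.coeff_single]
  exact Finsupp.single_apply

lemma coeff_add (f g : LaurentPolynomial Kq) (k : ℤ) :
    cf (f + g) k = cf f k + cf g k := rfl

lemma coeff_sub (f g : LaurentPolynomial Kq) (k : ℤ) :
    cf (f - g) k = cf f k - cf g k := rfl

lemma qq_ne : qq ≠ 0 := RatFunc.X_ne_zero

/-- There is no Laurent polynomial `f ∈ ℂ(q)[X, X⁻¹]` with
`q⁶X⁻⁶·f(X) + f(q⁻²X) = q⁶X⁻⁵ − q²X⁻¹`. -/
theorem no_laurent_solution :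
    ¬ ∃ f : LaurentPolynomial Kq,
      C (qq ^ 6) * T (-6) * f + substScale (qq ^ (-2 : ℤ)) f
        = C (qq ^ 6) * T (-5) - C (qq ^ 2) * T (-1) := by
  rintro ⟨f, hf⟩
  have key : ∀ k : ℤ, qq ^ 6 * cf f (k + 6) + cf f k * (qq ^ (-2 : ℤ)) ^ k
      = (if (-5 : ℤ) = k then qq ^ 6 else 0) - (if (-1 : ℤ) = k then qq ^ 2 else 0) := by
    intro k
    have h := congrArg (fun g => cf g k) hf
    simp only [coeff_add, coeff_sub, coeff_CT_mul, coeff_substScale, coeff_CT,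
      sub_neg_eq_add] at h
    exact h
  have hq6 : (qq : Kq) ^ 6 ≠ 0 := pow_ne_zero _ qq_ne
  have hq2 : (qq : Kq) ^ (-2 : ℤ) ≠ 0 := zpow_ne_zero _ qq_ne
  have hf0 : f ≠ 0 := by
    rintro rfl
    have := key (-5)
    simp [cf] at this
    exact hq6 this.symm
  have hsupp : (f.coeff).support.Nonempty :=
    Finsupp.support_nonempty_iff.mpr (by simpa using hf0)
  set N := (f.coeff).support.max' hsupp with hN
  set M := (f.coeff).support.min' hsupp with hM
  have hMN : M ≤ N := Finset.min'_le _ _ (Finset.max'_mem _ hsupp)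
  have hfN : cf f N ≠ 0 :=
    Finsupp.mem_support_iff.mp (Finset.max'_mem _ hsupp)
  have hfM : cf f M ≠ 0 :=
    Finsupp.mem_support_iff.mp (Finset.min'_mem _ hsupp)
  have hN6 : cf f (N + 6) = 0 := by
    by_contra h
    have := Finset.le_max' _ _ (Finsupp.mem_support_iff.mpr h)
    omega
  have hM6 : cf f (M - 6) = 0 := by
    by_contra h
    have := Finset.min'_le _ _ (Finsupp.mem_support_iff.mpr h)
    omega
  -- top degree of the LHS is `N`, so `N ∈ {-5, -1}`
  have keyN := key N
  rw [hN6, mul_zero, zero_add] at keyN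
  have hNne : cf f N * (qq ^ (-2 : ℤ)) ^ N ≠ 0 :=
    mul_ne_zero hfN (zpow_ne_zero _ hq2)
  have hNle : N = -5 ∨ N = -1 := by
    by_contra h
    push_neg at h
    rw [if_neg (by omega), if_neg (by omega), sub_zero] at keyN
    exact hNne keyN
  -- bottom degree of the LHS is `M - 6`, so `M - 6 ∈ {-5, -1}`
  have keyM := key (M - 6)
  rw [hM6, show M - 6 + 6 = M from by ring, zero_mul, add_zero] at keyM
  have hMne : qq ^ 6 * cf f M ≠ 0 := mul_ne_zero hq6 hfM
  have hMge : M - 6 = -5 ∨ M - 6 = -1 := by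
    by_contra h
    push_neg at h
    rw [if_neg (by omega), if_neg (by omega), sub_zero] at keyM
    exact hMne keyM
  omega

end
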